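/- Let f : ℝⁿ → ℝ be twice continuously differentiable with L_H-Lipschitz Hessian. Fix x ∈ ℝⁿ, set g := ∇f(x) and H := ∇²f(x), and suppose g ≠ 0. Let σ > 0, κ_a ≥ 1, ς₁ ∈ (0,1], ς₂ ∈ [0,1/2), κ_θ > 0, and let s ∈ ℝⁿ satisfy ‖(H + √(κ_a σ‖g‖)·I)s + g‖ ≤ ς₂·√(κ_a σ‖g‖)·‖s‖ and ‖s‖ ≤ ((1+κ_θ)/ς₁)·√(‖g‖/(κ_a σ)). Then ‖∇f(x+s)‖ ≤ (L_H(1+κ_θ)/(2 ς₁² κ_a σ) + (1+ς₂)/ς₁)·(1+κ_θ)·‖g‖. -/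

import Mathlib

open RealInnerProductSpace

theorem taylor_grad {n : ℕ}
    (f : EuclideanSpace ℝ (Fin n) → ℝ)
    (Hess : EuclideanSpace ℝ (Fin n) → EuclideanSpace ℝ (Fin n) →L[ℝ] EuclideanSpace ℝ (Fin n))
    (LH : ℝ)
    (hHess : ∀ y, HasFDerivAt (gradient f) (Hess y) y)
    (hLip : ∀ y z, ‖Hess y - Hess z‖ ≤ LH * ‖y - z‖)
    (x s : EuclideanSpace ℝ (Fin n)) :
    ‖gradient f (x + s) - gradient f x - Hess x s‖ ≤ LH / 2 * ‖s‖ ^ 2 := by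
  set g : ℝ → EuclideanSpace ℝ (Fin n) :=
    fun t => gradient f (x + t • s) - t • Hess x s - gradient f x with hgdef
  have hderiv : ∀ t : ℝ, HasDerivAt g (Hess (x + t • s) s - Hess x s) t := by
    intro t
    have h1 : HasDerivAt (fun t : ℝ => x + t • s) s t := by
      simpa using ((hasDerivAt_id t).smul_const s).const_add x
    have h2 : HasDerivAt (fun t : ℝ => gradient f (x + t • s)) (Hess (x + t • s) s) t :=
      (hHess (x + t • s)).comp_hasDerivAt (l := gradient f) t h1
    simpa [hgdef] using (h2.sub ((hasDerivAt_id t).smul_const (Hess x s))).sub_const (gradient f x)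
  have hB : ∀ t : ℝ, HasDerivAt (fun t : ℝ => LH * ‖s‖ ^ 2 * t ^ 2 / 2) (LH * ‖s‖ ^ 2 * t) t := by
    intro t
    have h := ((hasDerivAt_pow 2 t).const_mul (LH * ‖s‖ ^ 2)).div_const 2
    refine h.congr_deriv ?_
    simp only [Nat.cast_ofNat, Nat.reduceSub, pow_one]
    ring
  have key : ∀ u ∈ Set.Icc (0:ℝ) 1, ‖g u‖ ≤ LH * ‖s‖ ^ 2 * u ^ 2 / 2 := by
    apply image_norm_le_of_norm_deriv_right_le_deriv_boundary
      (f' := fun t => Hess (x + t • s) s - Hess x s)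
      (fun t _ => (hderiv t).continuousAt.continuousWithinAt)
      (fun t _ => (hderiv t).hasDerivWithinAt)
      (by simp [hgdef]) hB
    intro t ht
    have heq : Hess (x + t • s) s - Hess x s = (Hess (x + t • s) - Hess x) s := by
      simp [ContinuousLinearMap.sub_apply]
    have h1 : ‖(Hess (x + t • s) - Hess x) s‖ ≤ ‖Hess (x + t • s) - Hess x‖ * ‖s‖ :=
      (Hess (x + t • s) - Hess x).le_opNorm s
    have h2 : ‖Hess (x + t • s) - Hess x‖ ≤ LH * (t * ‖s‖) := by
      have h3 := hLip (x + t • s) x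
      have h4 : ‖x + t • s - x‖ = t * ‖s‖ := by
        simp [norm_smul, abs_of_nonneg ht.1]
      rw [h4] at h3
      exact h3
    calc ‖Hess (x + t • s) s - Hess x s‖ ≤ LH * (t * ‖s‖) * ‖s‖ := by
          rw [heq]
          exact h1.trans (mul_le_mul_of_nonneg_right h2 (norm_nonneg s))
      _ = LH * ‖s‖ ^ 2 * t := by ring
  have hk := key 1 ⟨zero_le_one, le_rfl⟩
  have hg1 : g 1 = gradient f (x + s) - gradient f x - Hess x s := by
    simp [hgdef]; abel
  rw [hg1] at hk
  calc ‖gradient f (x + s) - gradient f x - Hess x s‖ ≤ LH * ‖s‖ ^ 2 * 1 ^ 2 / 2 := hk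
    _ = LH / 2 * ‖s‖ ^ 2 := by ring

/-- Lemma 3.3 of the paper, inequality (3.17): gradient growth after a
convex-type regularized Newton step. -/
theorem gradient_growth_convex_step {n : ℕ}
    (f : EuclideanSpace ℝ (Fin n) → ℝ)
    (Hess : EuclideanSpace ℝ (Fin n) → EuclideanSpace ℝ (Fin n) →L[ℝ] EuclideanSpace ℝ (Fin n))
    (LH : ℝ)
    (hf : ContDiff ℝ 2 f)
    (hHess : ∀ y, HasFDerivAt (gradient f) (Hess y) y)
    (hLip : ∀ y z, ‖Hess y - Hess z‖ ≤ LH * ‖y - z‖)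
    (x s : EuclideanSpace ℝ (Fin n))
    (hg : gradient f x ≠ 0)
    (σ κa ς₁ ς₂ κθ : ℝ) (hσ : 0 < σ) (hκa : 1 ≤ κa)
    (hς₁0 : 0 < ς₁) (hς₁1 : ς₁ ≤ 1) (hς₂0 : 0 ≤ ς₂) (hς₂1 : ς₂ < 1 / 2) (hκθ : 0 < κθ)
    (hres : ‖Hess x s + Real.sqrt (κa * σ * ‖gradient f x‖) • s + gradient f x‖
      ≤ ς₂ * Real.sqrt (κa * σ * ‖gradient f x‖) * ‖s‖)
    (hslen : ‖s‖ ≤ ((1 + κθ) / ς₁) * Real.sqrt (‖gradient f x‖ / (κa * σ))) :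
    ‖gradient f (x + s)‖
      ≤ (LH * (1 + κθ) / (2 * ς₁ ^ 2 * κa * σ) + (1 + ς₂) / ς₁) * (1 + κθ)
          * ‖gradient f x‖ := by
  set G := ‖gradient f x‖ with hGdef
  have hG0 : 0 < G := norm_pos_iff.mpr hg
  have hA0 : 0 < κa * σ := mul_pos (lt_of_lt_of_le one_pos hκa) hσ
  set r := Real.sqrt (κa * σ * G) with hrdef
  have hr0 : 0 ≤ r := Real.sqrt_nonneg _
  -- LH is nonnegative
  have hLH : 0 ≤ LH := by
    rcases Nat.eq_zero_or_pos n with h0 | hpos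
    · exfalso
      subst h0
      exact hg (Subsingleton.elim _ _)
    · set y : EuclideanSpace ℝ (Fin n) := EuclideanSpace.single ⟨0, hpos⟩ 1 with hydef
      have hy : ‖y - 0‖ = 1 := by
        simp [hydef, EuclideanSpace.norm_single]
      have h := hLip y 0
      rw [hy, mul_one] at h
      exact le_trans (norm_nonneg _) h
  -- Taylor bound
  have hT : ‖gradient f (x + s) - gradient f x - Hess x s‖ ≤ LH / 2 * ‖s‖ ^ 2 :=
    taylor_grad f Hess LH hHess hLip x s
  -- triangle inequality decomposition
  have htri : ‖gradient f (x + s)‖ ≤ LH / 2 * ‖s‖ ^ 2 + ς₂ * r * ‖s‖ + r * ‖s‖ := by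
    have hdecomp : gradient f (x + s) =
        (gradient f (x + s) - gradient f x - Hess x s)
          + (Hess x s + r • s + gradient f x) - r • s := by
      abel
    calc ‖gradient f (x + s)‖
        = ‖(gradient f (x + s) - gradient f x - Hess x s)
            + (Hess x s + r • s + gradient f x) - r • s‖ := by rw [← hdecomp]
      _ ≤ ‖(gradient f (x + s) - gradient f x - Hess x s)
            + (Hess x s + r • s + gradient f x)‖ + ‖r • s‖ := norm_sub_le _ _
      _ ≤ ‖gradient f (x + s) - gradient f x - Hess x s‖
            + ‖Hess x s + r • s + gradient f x‖ + ‖r • s‖ := by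
          gcongr
          exact norm_add_le _ _
      _ ≤ LH / 2 * ‖s‖ ^ 2 + ς₂ * r * ‖s‖ + r * ‖s‖ := by
          have : ‖r • s‖ = r * ‖s‖ := by simp [norm_smul, abs_of_nonneg hr0]
          rw [this]
          gcongr
  -- key sqrt identities
  have hsq : Real.sqrt (G / (κa * σ)) ^ 2 = G / (κa * σ) :=
    Real.sq_sqrt (le_of_lt (div_pos hG0 hA0))
  have hrmul : r * Real.sqrt (G / (κa * σ)) = G := by
    rw [hrdef, ← Real.sqrt_mul (le_of_lt (mul_pos hA0 hG0))]
    · rw [show κa * σ * G * (G / (κa * σ)) = G ^ 2 by field_simp]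
      exact Real.sqrt_sq hG0.le
  -- bounds on r‖s‖ and ‖s‖²
  have hrs : r * ‖s‖ ≤ ((1 + κθ) / ς₁) * G := by
    calc r * ‖s‖ ≤ r * (((1 + κθ) / ς₁) * Real.sqrt (G / (κa * σ))) :=
          mul_le_mul_of_nonneg_left hslen hr0
      _ = ((1 + κθ) / ς₁) * (r * Real.sqrt (G / (κa * σ))) := by ring
      _ = ((1 + κθ) / ς₁) * G := by rw [hrmul]
  have hs2 : ‖s‖ ^ 2 ≤ ((1 + κθ) / ς₁) ^ 2 * (G / (κa * σ)) := by
    have h := mul_self_le_mul_self (norm_nonneg s) hslen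
    calc ‖s‖ ^ 2 = ‖s‖ * ‖s‖ := sq ‖s‖
      _ ≤ (((1 + κθ) / ς₁) * Real.sqrt (G / (κa * σ)))
            * (((1 + κθ) / ς₁) * Real.sqrt (G / (κa * σ))) := h
      _ = ((1 + κθ) / ς₁) ^ 2 * Real.sqrt (G / (κa * σ)) ^ 2 := by ring
      _ = ((1 + κθ) / ς₁) ^ 2 * (G / (κa * σ)) := by rw [hsq]
  -- final assembly
  have hfin : LH / 2 * ‖s‖ ^ 2 + ς₂ * r * ‖s‖ + r * ‖s‖
      ≤ LH / 2 * (((1 + κθ) / ς₁) ^ 2 * (G / (κa * σ)))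
        + (1 + ς₂) * (((1 + κθ) / ς₁) * G) := by
    have h1 : LH / 2 * ‖s‖ ^ 2 ≤ LH / 2 * (((1 + κθ) / ς₁) ^ 2 * (G / (κa * σ))) :=
      mul_le_mul_of_nonneg_left hs2 (by linarith)
    have h2 : (1 + ς₂) * (r * ‖s‖) ≤ (1 + ς₂) * (((1 + κθ) / ς₁) * G) :=
      mul_le_mul_of_nonneg_left hrs (by linarith)
    nlinarith [h1, h2]
  have heq : LH / 2 * (((1 + κθ) / ς₁) ^ 2 * (G / (κa * σ)))
        + (1 + ς₂) * (((1 + κθ) / ς₁) * G)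
      = (LH * (1 + κθ) / (2 * ς₁ ^ 2 * κa * σ) + (1 + ς₂) / ς₁) * (1 + κθ) * G := by
    field_simp
  linarith [htri, hfin, heq.le]
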